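/- Minty-type identification of the nonlinear limit (used to prove (7.8)): Let (X, μ) be a finite measure space, let ρ : ℝ → ℝ be continuous, bounded and nondecreasing, and let U, p, c ∈ L²(μ) with c ≥ 0 μ-almost everywhere. Suppose that for every w ∈ L²(μ) and every δ ∈ (0, 1], ∫_X ( U − c·ρ(p + δ·w) )·w dμ ≥ 0. Then U = c·ρ(p) μ-almost everywhere. -/

import Mathlib

open MeasureTheory Filter

private lemma l2_integrable_mul {X : Type*} [MeasurableSpace X] {μ : Measure X}
    {f g : X → ℝ} (hf : MemLp f 2 μ) (hg : MemLp g 2 μ) :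
    Integrable (fun x => f x * g x) μ := by
  refine Integrable.mono' (hf.integrable_sq.add hg.integrable_sq)
    (hf.1.mul hg.1) ?_
  filter_upwards with x
  rw [Real.norm_eq_abs, abs_le]
  constructor <;> simp only [Pi.add_apply] <;> nlinarith [sq_nonneg (f x + g x), sq_nonneg (f x - g x)]

/-- Minty-type identification of the nonlinear limit (used to prove (7.8)). -/
theorem minty_identification
    {X : Type*} [MeasurableSpace X] (μ : Measure X) [IsFiniteMeasure μ]
    (ρ : ℝ → ℝ) (hρc : Continuous ρ) (hρmono : Monotone ρ)
    (Cb : ℝ) (hρbd : ∀ x : ℝ, |ρ x| ≤ Cb)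
    (U p c : X → ℝ)
    (hU : MemLp U 2 μ) (hp : MemLp p 2 μ) (hc : MemLp c 2 μ)
    (hcnonneg : 0 ≤ᵐ[μ] c)
    (h : ∀ w : X → ℝ, MemLp w 2 μ → ∀ δ : ℝ, 0 < δ → δ ≤ 1 →
      0 ≤ ∫ x, (U x - c x * ρ (p x + δ * w x)) * w x ∂μ) :
    U =ᵐ[μ] fun x => c x * ρ (p x) := by
  have hCb0 : 0 ≤ Cb := le_trans (abs_nonneg _) (hρbd 0)
  -- Step 1: for every w ∈ L², 0 ≤ ∫ (U - c ρ(p)) w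
  have key : ∀ w : X → ℝ, MemLp w 2 μ →
      0 ≤ ∫ x, (U x - c x * ρ (p x)) * w x ∂μ := by
    intro w hw
    set δ : ℕ → ℝ := fun n => 1 / ((n : ℝ) + 1) with hδ
    have hδpos : ∀ n : ℕ, (0:ℝ) < δ n := by
      intro n; positivity
    have hδle : ∀ n : ℕ, δ n ≤ 1 := by
      intro n
      rw [hδ, div_le_one (by positivity)]
      linarith [Nat.cast_nonneg (α := ℝ) n]
    have hnn : ∀ n : ℕ,
        0 ≤ ∫ x, (U x - c x * ρ (p x + δ n * w x)) * w x ∂μ :=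
      fun n => h w hw (δ n) (hδpos n) (hδle n)
    have hUw : Integrable (fun x => U x * w x) μ := l2_integrable_mul hU hw
    have hcw : Integrable (fun x => c x * w x) μ := l2_integrable_mul hc hw
    have bound : Integrable (fun x => |U x * w x| + Cb * |c x * w x|) μ :=
      hUw.abs.add (hcw.abs.const_mul Cb)
    have hmeas : ∀ n : ℕ,
        AEStronglyMeasurable (fun x => (U x - c x * ρ (p x + δ n * w x)) * w x) μ := by
      intro n
      exact ((hU.1.sub (hc.1.mul
        (hρc.comp_aestronglyMeasurable (hp.1.add (hw.1.const_mul (δ n)))))).mul hw.1)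
    have hFbound : ∀ n : ℕ, ∀ᵐ x ∂μ,
        ‖(U x - c x * ρ (p x + δ n * w x)) * w x‖ ≤ |U x * w x| + Cb * |c x * w x| := by
      intro n
      filter_upwards with x
      rw [Real.norm_eq_abs]
      calc |(U x - c x * ρ (p x + δ n * w x)) * w x|
          = |U x * w x - (c x * w x) * ρ (p x + δ n * w x)| := by
            congr 1; ring
        _ ≤ |U x * w x| + |(c x * w x) * ρ (p x + δ n * w x)| := abs_sub _ _
        _ = |U x * w x| + |c x * w x| * |ρ (p x + δ n * w x)| := by
            rw [abs_mul (c x * w x)]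
        _ ≤ |U x * w x| + |c x * w x| * Cb := by
            gcongr
            exact hρbd _
        _ = |U x * w x| + Cb * |c x * w x| := by ring
    have hlim : ∀ᵐ x ∂μ,
        Tendsto (fun n => (U x - c x * ρ (p x + δ n * w x)) * w x) atTop
          (nhds ((U x - c x * ρ (p x)) * w x)) := by
      filter_upwards with x
      have h1 : Tendsto δ atTop (nhds 0) := tendsto_one_div_add_atTop_nhds_zero_nat
      have h2 : Tendsto (fun n => p x + δ n * w x) atTop (nhds (p x)) := by
        have h2' := (h1.mul_const (w x)).const_add (p x)
        rw [zero_mul, add_zero] at h2'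
        exact h2'
      have h3 : Tendsto (fun n => ρ (p x + δ n * w x)) atTop (nhds (ρ (p x))) :=
        (hρc.tendsto _).comp h2
      exact ((tendsto_const_nhds.sub ((tendsto_const_nhds.mul h3))).mul tendsto_const_nhds)
    have hT := tendsto_integral_of_dominated_convergence _ hmeas bound hFbound hlim
    exact ge_of_tendsto' hT hnn
  have key0 : ∀ w : X → ℝ, MemLp w 2 μ →
      ∫ x, (U x - c x * ρ (p x)) * w x ∂μ = 0 := by
    intro w hw
    have h1 := key w hw
    have h2 := key (fun x => -w x) hw.neg
    have h3 : ∫ x, (U x - c x * ρ (p x)) * (-w x) ∂μ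
        = - ∫ x, (U x - c x * ρ (p x)) * w x ∂μ := by
      rw [← integral_neg]
      congr 1; funext x; ring
    rw [h3] at h2
    linarith
  -- Step 3: f := U - c ρ(p) is in L²
  have hcp : MemLp (fun x => c x * ρ (p x)) 2 μ := by
    refine MemLp.of_le (hc.const_mul Cb)
      (hc.1.mul (hρc.comp_aestronglyMeasurable hp.1)) ?_
    filter_upwards with x
    rw [Real.norm_eq_abs, Real.norm_eq_abs, abs_mul, abs_mul, abs_of_nonneg hCb0]
    calc |c x| * |ρ (p x)| ≤ |c x| * Cb := by gcongr; exact hρbd _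
      _ = Cb * |c x| := by ring
  have hf2 : MemLp (fun x => U x - c x * ρ (p x)) 2 μ := hU.sub hcp
  -- Step 4: test with w = f
  have h0 := key0 _ hf2
  have hff : Integrable (fun x => (U x - c x * ρ (p x)) * (U x - c x * ρ (p x))) μ :=
    l2_integrable_mul hf2 hf2
  have hnn2 : 0 ≤ᵐ[μ] fun x => (U x - c x * ρ (p x)) * (U x - c x * ρ (p x)) :=
    ae_of_all _ fun x => mul_self_nonneg _
  have hz := (integral_eq_zero_iff_of_nonneg_ae hnn2 hff).mp h0
  filter_upwards [hz] with x hx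
  have : (U x - c x * ρ (p x)) = 0 := by
    have := mul_self_eq_zero.mp hx
    exact this
  linarith
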